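/- (Graham–Sloane-type lower bound for light codes) If n ≥ 4W, then L(W,n,w) ≥ (1/(n−2W))·C(n,w), i.e., there is an orientation of the Johnson graph J(n,w) under which at least C(n,w)/(n−2W) vertices have outdegree at most W. -/

import Mathlib

def weight {n : ℕ} (B : Fin n → Bool) : ℕ :=
  (Finset.univ.filter (fun i => B i = true)).card

def hamming {n : ℕ} (B B' : Fin n → Bool) : ℕ :=
  (Finset.univ.filter (fun i => B i ≠ B' i)).card

theorem hamming_comm {n : ℕ} (B B' : Fin n → Bool) : hamming B B' = hamming B' B := by
  unfold hamming; congr 1; ext i; simp [ne_comm]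

def johnson (n w : ℕ) : SimpleGraph {B : Fin n → Bool // weight B = w} where
  Adj B B' := hamming B.1 B'.1 = 2
  symm := ⟨fun B B' h => by rwa [hamming_comm]⟩
  loopless := ⟨fun B h => by simp [hamming] at h⟩

structure GraphOrientation {V : Type*} (G : SimpleGraph V) where
  dir : V → V → Prop
  dir_adj : ∀ u v, dir u v → G.Adj u v
  total : ∀ u v, G.Adj u v → dir u v ∨ dir v u
  asymm : ∀ u v, dir u v → ¬ dir v u

noncomputable def outdeg {V : Type*} {G : SimpleGraph V} (Λ : GraphOrientation G) (v : V) : ℕ :=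
  {u | Λ.dir v u}.ncard

noncomputable def Lmax (W n w : ℕ) : ℕ :=
  sSup {k | ∃ Λ : GraphOrientation (johnson n w), k = {B | outdeg Λ B ≤ W}.ncard}

/- ------------------------------------------------------------------ -/
/- Auxiliary development -/

def vertEquiv (n w : ℕ) : {B : Fin n → Bool // weight B = w} ≃ {s : Finset (Fin n) // s.card = w} where
  toFun B := ⟨Finset.univ.filter (fun i => B.1 i = true), B.2⟩
  invFun s := ⟨fun i => decide (i ∈ s.1), by simpa [weight] using s.2⟩
  left_inv B := by ext i; simp
  right_inv s := by ext i; simp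

theorem card_V (n w : ℕ) : Fintype.card {B : Fin n → Bool // weight B = w} = n.choose w := by
  rw [Fintype.card_congr (vertEquiv n w), Fintype.card_finset_len, Fintype.card_fin]

def tauS {n : ℕ} (B : Fin n → Bool) : ℕ := ∑ i : Fin n, if B i then (i:ℕ) else 0
def tau (m : ℕ) {n : ℕ} (B : Fin n → Bool) : ℕ := tauS B % m
def pairOf (r : ℕ) : ℕ := if r % 2 = 0 then r + 1 else r - 1
def bget {n : ℕ} (B : Fin n → Bool) (k : ℕ) : Bool := if h : k < n then B ⟨k, h⟩ else false
noncomputable def lowDiff {n : ℕ} (B B' : Fin n → Bool) : ℕ := sInf {k | bget B k ≠ bget B' k}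
noncomputable def swapRule {n : ℕ} (B B' : Fin n → Bool) : Prop :=
  (bget B (lowDiff B B') = bget B (pairOf (lowDiff B B'))) ↔ (lowDiff B B') % 2 = 0

lemma lowDiff_comm {n : ℕ} (B B' : Fin n → Bool) : lowDiff B B' = lowDiff B' B := by
  unfold lowDiff; congr 1; ext k; exact ne_comm

lemma pairOf_lt {W r : ℕ} (h : r < 2*W) : pairOf r < 2*W := by
  unfold pairOf; split <;> omega

lemma pairOf_ne {r : ℕ} : pairOf r ≠ r := by
  unfold pairOf; split <;> omega

lemma pairOf_parity {r : ℕ} : pairOf r % 2 ≠ r % 2 := by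
  unfold pairOf; split <;> omega

lemma pairOf_of_half {r s : ℕ} (h : r / 2 = s / 2) (hne : r ≠ s) : pairOf r = s := by
  unfold pairOf; split <;> omega

lemma sum_split {n : ℕ} {i j : Fin n} (hij : i ≠ j) (f g : Fin n → ℕ)
    (h : ∀ k, k ≠ i → k ≠ j → f k = g k) :
    (∑ k, f k) + (g i + g j) = (∑ k, g k) + (f i + f j) := by
  classical
  have hji : j ∈ Finset.univ.erase i := Finset.mem_erase.mpr ⟨hij.symm, Finset.mem_univ j⟩
  have e1 : ∀ f : Fin n → ℕ,
      (∑ k, f k) = (∑ k ∈ (Finset.univ.erase i).erase j, f k) + f j + f i := by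
    intro f
    rw [Finset.sum_erase_add _ _ hji, Finset.sum_erase_add _ _ (Finset.mem_univ i)]
  have hs : (∑ k ∈ (Finset.univ.erase i).erase j, f k)
      = ∑ k ∈ (Finset.univ.erase i).erase j, g k := by
    refine Finset.sum_congr rfl fun k hk => ?_
    have hk' := Finset.mem_erase.mp hk
    have hk'' := Finset.mem_erase.mp hk'.2
    exact h k hk''.1 hk'.1
  rw [e1 f, e1 g, hs]; omega

lemma adj_structure {W n w : ℕ} (hW : 4*W ≤ n) (hn : 0 < n) {B B' : Fin n → Bool}
    (hwB : weight B = w) (hwB' : weight B' = w) (hadj : hamming B B' = 2)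
    (ht : tau (n - 2*W) B = tau (n - 2*W) B') :
    ∃ r : ℕ, r < 2*W ∧
      (∀ k : Fin n, (B k ≠ B' k) ↔ ((k:ℕ) = r ∨ (k:ℕ) = r + (n - 2*W))) := by
  classical
  set m := n - 2*W with hmdef
  have hm0 : 0 < m := by omega
  obtain ⟨a, b, hab, hD⟩ := Finset.card_eq_two.mp hadj
  have hchar : ∀ k : Fin n, (B k ≠ B' k) ↔ (k = a ∨ k = b) := by
    intro k
    have : k ∈ Finset.univ.filter (fun i => B i ≠ B' i) ↔ k ∈ ({a, b} : Finset (Fin n)) := by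
      rw [hD]
    simpa using this
  have hda : B a ≠ B' a := (hchar a).mpr (Or.inl rfl)
  have hdb : B b ≠ B' b := (hchar b).mpr (Or.inr rfl)
  have hoff : ∀ k, k ≠ a → k ≠ b → B k = B' k := by
    intro k h1 h2
    by_contra h
    rcases (hchar k).mp h with h' | h' <;> [exact h1 h'; exact h2 h']
  have hw : (∑ k, (fun k => if B k = true then (1:ℕ) else 0) k)
        + ((if B' a = true then (1:ℕ) else 0) + (if B' b = true then (1:ℕ) else 0))
      = (∑ k, (fun k => if B' k = true then (1:ℕ) else 0) k)
        + ((if B a = true then (1:ℕ) else 0) + (if B b = true then (1:ℕ) else 0)) :=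
    sum_split hab (fun k => if B k = true then (1:ℕ) else 0)
      (fun k => if B' k = true then (1:ℕ) else 0) (fun k h1 h2 => by
        simp only [hoff k h1 h2])
  have e1 : weight B = ∑ k : Fin n, if B k = true then (1:ℕ) else 0 := Finset.card_filter _ _
  have e2 : weight B' = ∑ k : Fin n, if B' k = true then (1:ℕ) else 0 := Finset.card_filter _ _
  simp only at hw
  have hBab : B a ≠ B b := by
    intro he
    cases hBa : B a <;> cases hBb : B b <;> cases hB'a : B' a <;> cases hB'b : B' b <;>
      simp_all
  have htau : (∑ k, (fun k => if B k = true then (k:ℕ) else 0) k)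
        + ((if B' a = true then (a:ℕ) else 0) + (if B' b = true then (b:ℕ) else 0))
      = (∑ k, (fun k => if B' k = true then (k:ℕ) else 0) k)
        + ((if B a = true then (a:ℕ) else 0) + (if B b = true then (b:ℕ) else 0)) :=
    sum_split hab (fun k => if B k = true then (k:ℕ) else 0)
      (fun k => if B' k = true then (k:ℕ) else 0) (fun k h1 h2 => by
        simp only [hoff k h1 h2])
  have htau' : tauS B + ((if B' a = true then (a:ℕ) else 0) + (if B' b = true then (b:ℕ) else 0))
      = tauS B' + ((if B a = true then (a:ℕ) else 0) + (if B b = true then (b:ℕ) else 0)) := htau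
  have hmodS : tauS B ≡ tauS B' [MOD m] := ht
  have cancel : ∀ x y : ℕ, tauS B + y = tauS B' + x → Nat.ModEq m x y := by
    intro x y hxy
    have h1 : tauS B + y ≡ tauS B' + y [MOD m] := hmodS.add_right y
    rw [hxy] at h1
    exact Nat.ModEq.add_left_cancel' _ h1
  have hmod : Nat.ModEq m (a:ℕ) (b:ℕ) := by
    cases hBa : B a
    · have hBb : B b = true := by cases h : B b <;> simp_all
      have hB'a : B' a = true := by cases h : B' a <;> simp_all
      have hB'b : B' b = false := by cases h : B' b <;> simp_all
      rw [hBa, hBb, hB'a, hB'b] at htau'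
      simp at htau'
      exact (cancel (b:ℕ) (a:ℕ) htau').symm
    · have hBb : B b = false := by cases h : B b <;> simp_all
      have hB'a : B' a = false := by cases h : B' a <;> simp_all
      have hB'b : B' b = true := by cases h : B' b <;> simp_all
      rw [hBa, hBb, hB'a, hB'b] at htau'
      simp at htau'
      exact cancel (a:ℕ) (b:ℕ) htau'
  have haneb : (a:ℕ) ≠ (b:ℕ) := fun h => hab (Fin.ext h)
  have dvd_to_eq : ∀ x y : ℕ, x < y → y < n → m ∣ y - x → y = x + m := by
    intro x y hxy hyn hdvd
    obtain ⟨k, hk⟩ := hdvd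
    have hk2 : k ≠ 0 := by rintro rfl; omega
    have hk3 : k < 2 := by
      by_contra h
      have : 2 * m ≤ m * k := by
        calc 2 * m = m * 2 := by ring
          _ ≤ m * k := Nat.mul_le_mul_left m (by omega)
      omega
    interval_cases k <;> omega
  have key : ((a:ℕ) + m = (b:ℕ)) ∨ ((b:ℕ) + m = (a:ℕ)) := by
    rcases lt_or_gt_of_ne haneb with h | h
    · left
      have := dvd_to_eq a b h b.isLt ((Nat.modEq_iff_dvd' h.le).mp hmod)
      omega
    · right
      have := dvd_to_eq b a h a.isLt ((Nat.modEq_iff_dvd' h.le).mp hmod.symm)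
      omega
  rcases key with h | h
  · refine ⟨(a:ℕ), by have := b.isLt; omega, fun k => ?_⟩
    rw [hchar k, Fin.ext_iff, Fin.ext_iff]
    omega
  · refine ⟨(b:ℕ), by have := a.isLt; omega, fun k => ?_⟩
    rw [hchar k, Fin.ext_iff, Fin.ext_iff]
    omega

section Swap
variable {W n : ℕ} {B B' : Fin n → Bool} {r : ℕ}

lemma lowDiff_eq (hW : 4*W ≤ n) (hr : r < 2*W)
    (hchar : ∀ k : Fin n, (B k ≠ B' k) ↔ ((k:ℕ) = r ∨ (k:ℕ) = r + (n - 2*W))) :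
    lowDiff B B' = r := by
  have hrn : r < n := by omega
  have hmem : r ∈ {k | bget B k ≠ bget B' k} := by
    simp only [Set.mem_setOf_eq, bget, dif_pos hrn]
    exact (hchar ⟨r, hrn⟩).mpr (Or.inl rfl)
  refine le_antisymm (Nat.sInf_le hmem) (le_csInf ⟨r, hmem⟩ ?_)
  intro k hk
  simp only [Set.mem_setOf_eq, bget] at hk
  by_cases hkn : k < n
  · rw [dif_pos hkn, dif_pos hkn] at hk
    rcases (hchar ⟨k, hkn⟩).mp hk with h | h <;> simp at h <;> omega
  · omega

lemma bool_iff_helper {x y : Bool} {c : Prop} (hx : x ≠ y) (z : Bool) :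
    ((x = z) ↔ c) ↔ ¬((y = z) ↔ c) := by
  by_cases hc : c <;> cases x <;> cases y <;> cases z <;> simp_all

lemma swap_asymm (hW : 4*W ≤ n) (hr : r < 2*W)
    (hchar : ∀ k : Fin n, (B k ≠ B' k) ↔ ((k:ℕ) = r ∨ (k:ℕ) = r + (n - 2*W))) :
    swapRule B B' ↔ ¬ swapRule B' B := by
  have hld : lowDiff B B' = r := lowDiff_eq hW hr hchar
  have hld' : lowDiff B' B = r := (lowDiff_comm B' B).trans hld
  have hp : pairOf r < n := by have := pairOf_lt hr; omega
  have hrn : r < n := by omega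
  have hpne1 : pairOf r ≠ r := pairOf_ne
  have hpne2 : pairOf r ≠ r + (n - 2*W) := by have := pairOf_lt hr; omega
  have hBp : bget B' (pairOf r) = bget B (pairOf r) := by
    simp only [bget, dif_pos hp]
    by_contra h
    rcases (hchar ⟨pairOf r, hp⟩).mp (fun he => h he.symm) with h' | h' <;>
      simp at h' <;> [exact hpne1 h'; exact hpne2 h']
  have hBr : bget B r ≠ bget B' r := by
    simp only [bget, dif_pos hrn]
    exact (hchar ⟨r, hrn⟩).mpr (Or.inl rfl)
  unfold swapRule
  rw [hld, hld', hBp]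
  exact bool_iff_helper hBr _

end Swap

/- The orientation -/

noncomputable def theOrient (W n w : ℕ) (hW : 4*W ≤ n) (hn : 0 < n) (t : ℕ) :
    GraphOrientation (johnson n w) where
  dir B B' := (johnson n w).Adj B B' ∧
    ((tau (n-2*W) B.1 = t ∧ tau (n-2*W) B'.1 = t ∧ swapRule B.1 B'.1) ∨
     (tau (n-2*W) B.1 ≠ t ∧ tau (n-2*W) B'.1 = t) ∨
     (tau (n-2*W) B.1 ≠ t ∧ tau (n-2*W) B'.1 ≠ t ∧ WellOrderingRel B B'))
  dir_adj := fun u v h => h.1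
  total := by
    intro u v hadj
    have hh : hamming u.1 v.1 = 2 := hadj
    have hadj' : (johnson n w).Adj v u := (johnson n w).adj_symm hadj
    by_cases hu : tau (n-2*W) u.1 = t <;> by_cases hv : tau (n-2*W) v.1 = t
    · -- both in class t
      obtain ⟨r, hr, hchar⟩ := adj_structure hW hn u.2 v.2 hh (hu.trans hv.symm)
      have hiff := swap_asymm hW hr hchar
      by_cases hs : swapRule u.1 v.1
      · exact Or.inl ⟨hadj, Or.inl ⟨hu, hv, hs⟩⟩
      · have : swapRule v.1 u.1 := by
          by_contra h
          exact hs (hiff.mpr h)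
        exact Or.inr ⟨hadj', Or.inl ⟨hv, hu, this⟩⟩
    · exact Or.inr ⟨hadj', Or.inr (Or.inl ⟨hv, hu⟩)⟩
    · exact Or.inl ⟨hadj, Or.inr (Or.inl ⟨hu, hv⟩)⟩
    · rcases trichotomous_of WellOrderingRel u v with h1 | h1 | h1
      · exact Or.inl ⟨hadj, Or.inr (Or.inr ⟨hu, hv, h1⟩)⟩
      · exact absurd h1 ((johnson n w).ne_of_adj hadj)
      · exact Or.inr ⟨hadj', Or.inr (Or.inr ⟨hv, hu, h1⟩)⟩
  asymm := by
    intro u v h1 h2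
    obtain ⟨hadj, hd1⟩ := h1
    obtain ⟨hadj', hd2⟩ := h2
    have hh : hamming u.1 v.1 = 2 := hadj
    rcases hd1 with ⟨hu, hv, hs1⟩ | ⟨hu, hv⟩ | ⟨hu, hv, hw1⟩ <;>
      rcases hd2 with ⟨hv', hu', hs2⟩ | ⟨hv', hu'⟩ | ⟨hv', hu', hw2⟩ <;>
        try contradiction
    · obtain ⟨r, hr, hchar⟩ := adj_structure hW hn u.2 v.2 hh (hu.trans hv.symm)
      exact (swap_asymm hW hr hchar).mp hs1 hs2
    · exact asymm_of WellOrderingRel hw1 hw2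

lemma outdeg_theOrient_le {W n w : ℕ} (hW : 4*W ≤ n) (hn : 0 < n) (t : ℕ)
    (B : {B : Fin n → Bool // weight B = w}) (hB : tau (n-2*W) B.1 = t) :
    outdeg (theOrient W n w hW hn t) B ≤ W := by
  classical
  rw [outdeg]
  have struct : ∀ u, (theOrient W n w hW hn t).dir B u →
      ∃ r : ℕ, r < 2*W ∧ lowDiff B.1 u.1 = r ∧ swapRule B.1 u.1 ∧
        (∀ k : Fin n, (B.1 k ≠ u.1 k) ↔ ((k:ℕ) = r ∨ (k:ℕ) = r + (n - 2*W))) := by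
    intro u hu
    obtain ⟨hadj, hd⟩ := hu
    have hh : hamming B.1 u.1 = 2 := hadj
    rcases hd with ⟨_, hut, hs⟩ | ⟨hBt, _⟩ | ⟨hBt, _, _⟩
    · obtain ⟨r, hr, hchar⟩ := adj_structure hW hn B.2 u.2 hh (hB.trans hut.symm)
      exact ⟨r, hr, lowDiff_eq hW hr hchar, hs, hchar⟩
    · exact absurd hB hBt
    · exact absurd hB hBt
  have hle : {u | (theOrient W n w hW hn t).dir B u}.ncard
      ≤ ((Finset.range W : Finset ℕ) : Set ℕ).ncard := by
    apply Set.ncard_le_ncard_of_injOn (fun u => lowDiff B.1 u.1 / 2)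
    · intro u hu
      obtain ⟨r, hr, hld, _, _⟩ := struct u hu
      simp only [Finset.coe_range, Set.mem_Iio, hld]
      omega
    · intro u₁ hu₁ u₂ hu₂ heq
      obtain ⟨r₁, hr₁, hld₁, hs₁, hchar₁⟩ := struct u₁ hu₁
      obtain ⟨r₂, hr₂, hld₂, hs₂, hchar₂⟩ := struct u₂ hu₂
      simp only [hld₁, hld₂] at heq
      by_cases hr12 : r₁ = r₂
      · subst hr12
        refine Subtype.ext (funext fun k => ?_)
        have hboth : ∀ x y z : Bool, x ≠ y → x ≠ z → y = z := by decide
        by_cases hd : B.1 k ≠ u₁.1 k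
        · have h2 : B.1 k ≠ u₂.1 k := (hchar₂ k).mpr ((hchar₁ k).mp hd)
          exact hboth _ _ _ hd h2
        · push_neg at hd
          have h2 : B.1 k = u₂.1 k := by
            by_contra h
            exact ((hchar₁ k).mpr ((hchar₂ k).mp h)) hd
          rw [← hd, ← h2]
      · exfalso
        have hp12 : pairOf r₁ = r₂ := pairOf_of_half heq hr12
        have hp21 : pairOf r₂ = r₁ := pairOf_of_half heq.symm (Ne.symm hr12)
        unfold swapRule at hs₁ hs₂
        rw [hld₁, hp12] at hs₁
        rw [hld₂, hp21] at hs₂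
        have hpar : r₂ % 2 ≠ r₁ % 2 := by
          have := pairOf_parity (r := r₁); rw [hp12] at this; exact this
        by_cases h1 : r₁ % 2 = 0
        · have e1 : bget B.1 r₁ = bget B.1 r₂ := hs₁.mpr h1
          have h2 : r₂ % 2 = 0 := hs₂.mp e1.symm
          omega
        · have h2 : r₂ % 2 = 0 := by omega
          have e2 : bget B.1 r₂ = bget B.1 r₁ := hs₂.mpr h2
          have h1' : r₁ % 2 = 0 := hs₁.mp e2.symm
          omega
  rwa [Set.ncard_coe_finset, Finset.card_range] at hle

theorem stmt13 (W n w : ℕ) (hW : 4 * W ≤ n) (hn : 0 < n) :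
    n.choose w ≤ (n - 2 * W) * Lmax W n w := by
  classical
  set m := n - 2*W with hmdef
  have hm0 : 0 < m := by omega
  have hcard : Fintype.card {B : Fin n → Bool // weight B = w} = n.choose w := card_V n w
  have hfib : (Finset.univ : Finset {B : Fin n → Bool // weight B = w}).card
      = ∑ s ∈ Finset.range m,
          (Finset.univ.filter (fun B : {B : Fin n → Bool // weight B = w} => tau m B.1 = s)).card :=
    Finset.card_eq_sum_card_fiberwise (fun B _ => Finset.mem_range.mpr (Nat.mod_lt _ hm0))
  have hex : ∃ s ∈ Finset.range m, n.choose w ≤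
      m * (Finset.univ.filter (fun B : {B : Fin n → Bool // weight B = w} => tau m B.1 = s)).card := by
    apply Finset.exists_le_of_sum_le ⟨0, Finset.mem_range.mpr hm0⟩
    rw [Finset.sum_const, ← Finset.mul_sum, ← hfib, Finset.card_univ, hcard, Finset.card_range,
      smul_eq_mul]
  obtain ⟨t, _, hle⟩ := hex
  set Λ := theOrient W n w hW hn t with hΛ
  have h1 : (Finset.univ.filter
      (fun B : {B : Fin n → Bool // weight B = w} => tau m B.1 = t)).card
      ≤ {B | outdeg Λ B ≤ W}.ncard := by
    rw [← Set.ncard_coe_finset]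
    apply Set.ncard_le_ncard
    · intro B hB
      simp only [Finset.coe_filter, Set.mem_setOf_eq, Finset.mem_univ, true_and] at hB
      exact outdeg_theOrient_le hW hn t B hB
    · exact Set.toFinite _
  have h2 : {B | outdeg Λ B ≤ W}.ncard ≤ Lmax W n w := by
    apply le_csSup
    · refine ⟨Fintype.card {B : Fin n → Bool // weight B = w}, ?_⟩
      rintro k ⟨Λ', rfl⟩
      calc {B | outdeg Λ' B ≤ W}.ncard ≤ (Set.univ : Set {B : Fin n → Bool // weight B = w}).ncard :=
            Set.ncard_le_ncard (Set.subset_univ _) Set.finite_univ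
        _ = _ := by rw [Set.ncard_univ, Nat.card_eq_fintype_card]
    · exact ⟨Λ, rfl⟩
  calc n.choose w ≤ m * (Finset.univ.filter
        (fun B : {B : Fin n → Bool // weight B = w} => tau m B.1 = t)).card := hle
    _ ≤ m * Lmax W n w := Nat.mul_le_mul_left m (h1.trans h2)
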